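/- Under the standing assumptions on φ and φ_λ, fix p ∈ [0,1] and define M(p) := {x ∈ H : φ(x) ≥ p} and, for λ > 0, M_λ(p) := {x ∈ H : φ_λ(x) ≥ p}. Then: (a) for every sequence λ_k → 0⁺, the sets M_{λ_k}(p) converge to M(p) in the Painlevé–Kuratowski sense, i.e. M(p) ⊆ M_{λ_k}(p) for every k (so every point of M(p) is a strong limit of points of M_{λ_k}(p)), and whenever x_k ∈ M_{λ_k}(p) converges strongly to x, then x ∈ M(p); (b) if moreover h is sequentially weakly continuous on H, the convergence holds in the Mosco sense: whenever x_k ∈ M_{λ_k}(p) converges weakly to x, then x ∈ M(p). (Proposition 5.1.) -/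

import Mathlib

open Filter Topology MeasureTheory

set_option maxHeartbeats 1000000

/-- The Moreau envelope of a function `S : H × E → ℝ` (in two arguments) with parameter
`lam`, for the Hilbert norm of the product. -/
noncomputable def moreauEnv2 {H E : Type*} [NormedAddCommGroup H] [InnerProductSpace ℝ H]
    [NormedAddCommGroup E] [InnerProductSpace ℝ E]
    (S : H → E → ℝ) (lam : ℝ) (x : H) (z : E) : ℝ :=
  ⨅ u : H × E, (S u.1 u.2 + (‖x - u.1‖ ^ 2 + ‖z - u.2‖ ^ 2) / (2 * lam))

/-- Weak (sequential) convergence in a Hilbert space: `⟪x_k, y⟫ → ⟪x₀, y⟫` for every `y`. -/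
def WeakSeqTendsto {H : Type*} [NormedAddCommGroup H] [InnerProductSpace ℝ H]
    (x : ℕ → H) (x₀ : H) : Prop :=
  ∀ y : H, Tendsto (fun k => (inner ℝ (x k) y : ℝ)) atTop (𝓝 (inner ℝ x₀ y))

section AuxMinorant

open Set

/-- A continuous convex function on a normed space admits a continuous affine minorant. -/
lemma exists_minorant {W : Type*} [NormedAddCommGroup W] [NormedSpace ℝ W]
    {F : W → ℝ} (hconv : ConvexOn ℝ Set.univ F) (hcont : Continuous F) :
    ∃ (g : W →L[ℝ] ℝ) (c : ℝ), ∀ w, g w + c ≤ F w := by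
  set U : Set (W × ℝ) := {q | F q.1 < q.2} with hU
  have hUo : IsOpen U := isOpen_lt (hcont.comp continuous_fst) continuous_snd
  have hUc : Convex ℝ U := by
    rintro q hq r hr a b ha hb hab
    have hq' : F q.1 < q.2 := hq
    have hr' : F r.1 < r.2 := hr
    have h1 : F (a • q.1 + b • r.1) ≤ a * F q.1 + b * F r.1 :=
      hconv.2 (mem_univ q.1) (mem_univ r.1) ha hb hab
    have h2 : a * F q.1 + b * F r.1 < a * q.2 + b * r.2 := by
      rcases ha.lt_or_eq with ha' | ha'
      · have h3 : a * F q.1 < a * q.2 := mul_lt_mul_of_pos_left hq' ha'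
        have h4 : b * F r.1 ≤ b * r.2 := mul_le_mul_of_nonneg_left hr'.le hb
        linarith
      · have hb' : b = 1 := by linarith
        rw [← ha', hb']; simpa using hr'
    show F (a • q + b • r).1 < (a • q + b • r).2
    simpa using lt_of_le_of_lt h1 h2
  have hx : ((0 : W), F 0 - 1) ∉ U := by simp [hU]
  obtain ⟨f, hf⟩ := geometric_hahn_banach_open_point hUc hUo hx
  set β : ℝ := f ((0 : W), (1 : ℝ)) with hβ
  set g₀ : W →L[ℝ] ℝ := f.comp (ContinuousLinearMap.inl ℝ W ℝ) with hg₀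
  set c₀ : ℝ := f ((0 : W), F 0 - 1) with hc₀
  have hft : ∀ (w : W) (t : ℝ), f (w, t) = g₀ w + t * β := by
    intro w t
    have h1 : (w, t) = ((w, (0 : ℝ)) + t • ((0 : W), (1:ℝ))) := by
      simp [Prod.ext_iff]
    rw [h1, map_add, f.map_smul]
    simp [hg₀, smul_eq_mul, hβ]
  have hfU : ∀ (w : W) (t : ℝ), F w < t → g₀ w + t * β < c₀ := by
    intro w t ht
    have := hf (w, t) ht
    rwa [hft] at this
  have hc0 : c₀ = g₀ 0 + (F 0 - 1) * β := by rw [hc₀, hft]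
  have hβneg : β < 0 := by
    rcases lt_trichotomy β 0 with hh | hh | hh
    · exact hh
    · exfalso
      have h0 := hfU 0 (F 0 + 1) (by linarith)
      rw [hh] at h0 hc0; simp at h0 hc0; linarith
    · exfalso
      set t : ℝ := max (F 0 + 1) ((c₀ - g₀ 0) / β + 1) with htdef
      have ht1 : F 0 < t := lt_of_lt_of_le (by linarith) (le_max_left _ _)
      have h0 := hfU 0 t ht1
      have ht2 : (c₀ - g₀ 0) / β + 1 ≤ t := le_max_right _ _
      have h5 : c₀ - g₀ 0 ≤ (t - 1) * β := by
        rw [div_add' _ _ _ (ne_of_gt hh), div_le_iff₀ hh] at ht2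
        linarith
      nlinarith
  have hβ' : (0:ℝ) < -β := by linarith
  have hkey : ∀ w, g₀ w + β * F w ≤ c₀ := by
    intro w
    refine le_of_forall_pos_le_add fun ε hε => ?_
    have hεβ : 0 < ε / (-β) := div_pos hε hβ'
    have h8 := hfU w (F w + ε / (-β)) (by linarith)
    have h9 : (F w + ε / (-β)) * β = F w * β - ε := by
      rw [div_neg, add_mul, neg_mul, div_mul_cancel₀ _ (ne_of_lt hβneg)]; ring
    rw [h9] at h8
    nlinarith [h8]
  refine ⟨(-β)⁻¹ • g₀, c₀ / β, fun w => ?_⟩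
  have h1 := hkey w
  have h2 : ((-β)⁻¹ • g₀) w = (-β)⁻¹ * g₀ w := rfl
  have hinv : (0:ℝ) < (-β)⁻¹ := inv_pos.2 hβ'
  have h4 := mul_le_mul_of_nonneg_left h1 hinv.le
  have hm : (-β)⁻¹ * β = -1 := by
    rw [inv_neg, neg_mul, inv_mul_cancel₀ (ne_of_lt hβneg)]
  have h7 : (-β)⁻¹ * (g₀ w + β * F w) = (-β)⁻¹ * g₀ w - F w := by
    rw [mul_add, ← mul_assoc, hm]; ring
  have h6 : c₀ / β = -((-β)⁻¹ * c₀) := by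
    field_simp
  rw [h7] at h4
  rw [h2, h6]
  linarith

end AuxMinorant

section Mor

open Set

variable {H E : Type*} [NormedAddCommGroup H] [InnerProductSpace ℝ H]
  [NormedAddCommGroup E] [InnerProductSpace ℝ E]
  {S : H → E → ℝ} {g : (H × E) →L[ℝ] ℝ} {c : ℝ}

lemma term_lb (hgc : ∀ w : H × E, g w + c ≤ S w.1 w.2) {lam : ℝ} (hl : 0 < lam)
    (x : H) (z : E) (u : H × E) :
    g (x, z) + c - lam * ‖g‖ ^ 2 / 2 ≤ S u.1 u.2 + (‖x - u.1‖ ^ 2 + ‖z - u.2‖ ^ 2) / (2 * lam) := by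
  have h1 := hgc u
  have hnorm : ‖(x, z) - u‖ = max ‖x - u.1‖ ‖z - u.2‖ := by
    rw [Prod.norm_def]; rfl
  have hga : |g ((x, z) - u)| ≤ ‖g‖ * max ‖x - u.1‖ ‖z - u.2‖ := by
    rw [← hnorm, ← Real.norm_eq_abs]; exact g.le_opNorm _
  have hgw : g (x, z) - g u = g ((x, z) - u) := by rw [map_sub]
  set a := ‖x - u.1‖ with ha
  set b := ‖z - u.2‖ with hb
  have hG : (0:ℝ) ≤ ‖g‖ := ContinuousLinearMap.opNorm_nonneg g
  have h2 : g (x, z) ≤ S u.1 u.2 - c + ‖g‖ * max a b := by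
    have := abs_le.1 hga
    linarith [this.2, hgw, h1]
  have hmax : ‖g‖ * max a b ≤ (a ^ 2 + b ^ 2) / (2 * lam) + lam * ‖g‖ ^ 2 / 2 := by
    have h2l : (0:ℝ) < 2 * lam := by linarith
    rcases le_total a b with hab | hab
    · rw [max_eq_right hab]
      rw [div_add' _ _ _ (ne_of_gt h2l), le_div_iff₀ h2l]
      nlinarith [sq_nonneg (b - lam * ‖g‖), sq_nonneg a]
    · rw [max_eq_left hab]
      rw [div_add' _ _ _ (ne_of_gt h2l), le_div_iff₀ h2l]
      nlinarith [sq_nonneg (a - lam * ‖g‖), sq_nonneg b]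
  linarith

lemma mor_bdd (hgc : ∀ w : H × E, g w + c ≤ S w.1 w.2) {lam : ℝ} (hl : 0 < lam)
    (x : H) (z : E) :
    BddBelow (Set.range fun u : H × E =>
      S u.1 u.2 + (‖x - u.1‖ ^ 2 + ‖z - u.2‖ ^ 2) / (2 * lam)) := by
  refine ⟨g (x, z) + c - lam * ‖g‖ ^ 2 / 2, ?_⟩
  rintro _ ⟨u, rfl⟩
  exact term_lb hgc hl x z u

lemma mor_le (hgc : ∀ w : H × E, g w + c ≤ S w.1 w.2) {lam : ℝ} (hl : 0 < lam)
    (x : H) (z : E) : moreauEnv2 S lam x z ≤ S x z := by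
  have := ciInf_le (mor_bdd hgc hl x z) (x, z)
  simpa [moreauEnv2] using this

lemma mor_mono (hgc : ∀ w : H × E, g w + c ≤ S w.1 w.2) {l1 l2 : ℝ} (h1 : 0 < l1)
    (h12 : l1 ≤ l2) (x : H) (z : E) : moreauEnv2 S l2 x z ≤ moreauEnv2 S l1 x z := by
  refine ciInf_mono (mor_bdd hgc (lt_of_lt_of_le h1 h12) x z) fun u => ?_
  have hnum : (0:ℝ) ≤ ‖x - u.1‖ ^ 2 + ‖z - u.2‖ ^ 2 := by positivity
  gcongr

lemma mor_approx (hgc : ∀ w : H × E, g w + c ≤ S w.1 w.2)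
    (hcont : Continuous fun w : H × E => S w.1 w.2) (x : H) (z : E) {ε : ℝ} (hε : 0 < ε) :
    ∃ l0 > 0, ∀ lam, 0 < lam → lam ≤ l0 → S x z - ε ≤ moreauEnv2 S lam x z := by
  obtain ⟨δ, hδ, hδc⟩ := Metric.continuousAt_iff.1 (hcont.continuousAt (x := (x, z))) ε hε
  set G := ‖g‖ with hGdef
  have hG : (0:ℝ) ≤ G := ContinuousLinearMap.opNorm_nonneg g
  set D := S x z - (g (x, z) + c) with hDdef
  have hD : 0 ≤ D := by have := hgc (x, z); simp only [hDdef]; linarith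
  refine ⟨δ ^ 2 / (2 * (D + G * δ + 1)), by positivity, fun lam hlam hlam2 => ?_⟩
  have h2l : (0:ℝ) < 2 * lam := by linarith
  refine le_ciInf fun u => ?_
  set a := ‖x - u.1‖ with ha
  set b := ‖z - u.2‖ with hb
  have ha0 : 0 ≤ a := norm_nonneg _
  have hb0 : 0 ≤ b := norm_nonneg _
  have hquad : (0:ℝ) ≤ (a ^ 2 + b ^ 2) / (2 * lam) := by positivity
  have hdist : dist u (x, z) = max a b := by
    rw [dist_eq_norm, Prod.norm_def]
    show max ‖u.1 - x‖ ‖u.2 - z‖ = _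
    rw [norm_sub_rev, ha, norm_sub_rev u.2, hb]
  rcases lt_or_ge (max a b) δ with hm | hm
  · have := hδc (by rw [hdist]; exact hm)
    have h3 : |S u.1 u.2 - S x z| < ε := by
      rw [Real.dist_eq] at this; exact this
    have := (abs_lt.1 h3).1
    linarith
  · have hterm := term_lb hgc hlam x z u
    set m := max a b with hmdef
    have hm0 : 0 < m := lt_of_lt_of_le hδ hm
    have hab2 : m ^ 2 ≤ a ^ 2 + b ^ 2 := by
      rcases max_cases a b with ⟨h, _⟩ | ⟨h, _⟩ <;> rw [hmdef, h] <;> nlinarith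
    have hSu : S x z - D - G * m ≤ S u.1 u.2 := by
      have h1 := hgc u
      have hgw : g (x, z) - g u = g ((x, z) - u) := by rw [map_sub]
      have hnorm : ‖(x, z) - u‖ = m := by rw [Prod.norm_def]; rfl
      have hga : |g ((x, z) - u)| ≤ G * m := by
        rw [← hnorm, ← Real.norm_eq_abs]; exact g.le_opNorm _
      have h2ab := abs_le.1 hga
      simp only [hDdef]
      linarith [h2ab.2]
    have hpos : (0:ℝ) < 2 * (D + G * δ + 1) := by positivity
    have hlam3 : 2 * lam * (D + G * δ + 1) ≤ δ ^ 2 := by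
      have h' := (le_div_iff₀ hpos).1 hlam2
      linarith
    have hGlam : 2 * lam * G ≤ δ := by
      have h1 : 2 * lam * G * δ ≤ δ * δ := by nlinarith [hlam3]
      exact le_of_mul_le_mul_right (by linarith) hδ
    have hmain : 2 * lam * (D + G * m) ≤ m ^ 2 := by
      have hfac : 0 ≤ (m - δ) * (m + δ - 2 * lam * G) := by
        apply mul_nonneg (by linarith)
        linarith
      nlinarith [hlam3]
    have hq2 : m ^ 2 / (2 * lam) ≤ (a ^ 2 + b ^ 2) / (2 * lam) := by gcongr
    have : D + G * m ≤ m ^ 2 / (2 * lam) := by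
      rw [le_div_iff₀ h2l]; linarith
    linarith

lemma sq_combo {A B s t : ℝ} (hA : 0 ≤ A) (hB : 0 ≤ B) (hab : A + B = 1) :
    (A * s + B * t) ^ 2 ≤ A * s ^ 2 + B * t ^ 2 := by
  nlinarith [sq_nonneg (s - t), mul_nonneg hA hB]

lemma mor_convex (hSconv : ConvexOn ℝ Set.univ fun w : H × E => S w.1 w.2)
    (hgc : ∀ w : H × E, g w + c ≤ S w.1 w.2) {lam : ℝ} (hl : 0 < lam) :
    ConvexOn ℝ Set.univ (fun w : H × E => moreauEnv2 S lam w.1 w.2) := by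
  refine ⟨convex_univ, fun w1 _ w2 _ A B hA hB hab => ?_⟩
  refine le_of_forall_pos_le_add fun ε hε => ?_
  obtain ⟨u1, hu1⟩ := exists_lt_of_ciInf_lt
    (show moreauEnv2 S lam w1.1 w1.2 < moreauEnv2 S lam w1.1 w1.2 + ε from by linarith)
  obtain ⟨u2, hu2⟩ := exists_lt_of_ciInf_lt
    (show moreauEnv2 S lam w2.1 w2.2 < moreauEnv2 S lam w2.1 w2.2 + ε from by linarith)
  set w := A • w1 + B • w2 with hw
  set u := A • u1 + B • u2 with hu
  have hstep : moreauEnv2 S lam w.1 w.2 ≤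
      S u.1 u.2 + (‖w.1 - u.1‖ ^ 2 + ‖w.2 - u.2‖ ^ 2) / (2 * lam) :=
    ciInf_le (mor_bdd hgc hl w.1 w.2) u
  have hS2 : S u.1 u.2 ≤ A * S u1.1 u1.2 + B * S u2.1 u2.2 := by
    have := hSconv.2 (mem_univ u1) (mem_univ u2) hA hB hab
    simpa [hu] using this
  have hq1 : ‖w.1 - u.1‖ ^ 2 ≤ A * ‖w1.1 - u1.1‖ ^ 2 + B * ‖w2.1 - u2.1‖ ^ 2 := by
    have hid : w.1 - u.1 = A • (w1.1 - u1.1) + B • (w2.1 - u2.1) := by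
      simp [hw, hu, smul_sub]; abel
    have hn : ‖w.1 - u.1‖ ≤ A * ‖w1.1 - u1.1‖ + B * ‖w2.1 - u2.1‖ := by
      rw [hid]
      refine (norm_add_le _ _).trans ?_
      rw [norm_smul, norm_smul, Real.norm_eq_abs, Real.norm_eq_abs,
        abs_of_nonneg hA, abs_of_nonneg hB]
    calc ‖w.1 - u.1‖ ^ 2 ≤ (A * ‖w1.1 - u1.1‖ + B * ‖w2.1 - u2.1‖) ^ 2 := by
          nlinarith [norm_nonneg (w.1 - u.1), hn]
      _ ≤ A * ‖w1.1 - u1.1‖ ^ 2 + B * ‖w2.1 - u2.1‖ ^ 2 := sq_combo hA hB hab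
  have hq2 : ‖w.2 - u.2‖ ^ 2 ≤ A * ‖w1.2 - u1.2‖ ^ 2 + B * ‖w2.2 - u2.2‖ ^ 2 := by
    have hid : w.2 - u.2 = A • (w1.2 - u1.2) + B • (w2.2 - u2.2) := by
      simp [hw, hu, smul_sub]; abel
    have hn : ‖w.2 - u.2‖ ≤ A * ‖w1.2 - u1.2‖ + B * ‖w2.2 - u2.2‖ := by
      rw [hid]
      refine (norm_add_le _ _).trans ?_
      rw [norm_smul, norm_smul, Real.norm_eq_abs, Real.norm_eq_abs,
        abs_of_nonneg hA, abs_of_nonneg hB]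
    calc ‖w.2 - u.2‖ ^ 2 ≤ (A * ‖w1.2 - u1.2‖ + B * ‖w2.2 - u2.2‖) ^ 2 := by
          nlinarith [norm_nonneg (w.2 - u.2), hn]
      _ ≤ A * ‖w1.2 - u1.2‖ ^ 2 + B * ‖w2.2 - u2.2‖ ^ 2 := sq_combo hA hB hab
  have h2l : (0:ℝ) < 2 * lam := by linarith
  have hdiv : (‖w.1 - u.1‖ ^ 2 + ‖w.2 - u.2‖ ^ 2) / (2 * lam) ≤
      A * ((‖w1.1 - u1.1‖ ^ 2 + ‖w1.2 - u1.2‖ ^ 2) / (2 * lam)) +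
      B * ((‖w2.1 - u2.1‖ ^ 2 + ‖w2.2 - u2.2‖ ^ 2) / (2 * lam)) := by
    rw [div_le_iff₀ h2l]
    have e1 : A * ((‖w1.1 - u1.1‖ ^ 2 + ‖w1.2 - u1.2‖ ^ 2) / (2 * lam)) * (2 * lam)
        = A * (‖w1.1 - u1.1‖ ^ 2 + ‖w1.2 - u1.2‖ ^ 2) := by field_simp
    have e2 : B * ((‖w2.1 - u2.1‖ ^ 2 + ‖w2.2 - u2.2‖ ^ 2) / (2 * lam)) * (2 * lam)
        = B * (‖w2.1 - u2.1‖ ^ 2 + ‖w2.2 - u2.2‖ ^ 2) := by field_simp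
    rw [add_mul, e1, e2]
    nlinarith [hq1, hq2]
  have hfin := hstep.trans (by linarith [hS2, hdiv] :
    S u.1 u.2 + (‖w.1 - u.1‖ ^ 2 + ‖w.2 - u.2‖ ^ 2) / (2 * lam) ≤
      A * (S u1.1 u1.2 + (‖w1.1 - u1.1‖ ^ 2 + ‖w1.2 - u1.2‖ ^ 2) / (2 * lam)) +
      B * (S u2.1 u2.2 + (‖w2.1 - u2.1‖ ^ 2 + ‖w2.2 - u2.2‖ ^ 2) / (2 * lam)))
  have hb1 := mul_le_mul_of_nonneg_left hu1.le hA
  have hb2 := mul_le_mul_of_nonneg_left hu2.le hB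
  calc moreauEnv2 S lam w.1 w.2 ≤ _ := hfin
    _ ≤ A * (moreauEnv2 S lam w1.1 w1.2 + ε) + B * (moreauEnv2 S lam w2.1 w2.2 + ε) := by
        exact add_le_add hb1 hb2
    _ = A * moreauEnv2 S lam w1.1 w1.2 + B * moreauEnv2 S lam w2.1 w2.2 + ε := by
        have he : A * ε + B * ε = ε := by rw [← add_mul, hab, one_mul]
        rw [mul_add, mul_add]; linarith [he]

lemma mor_est (hgc : ∀ w : H × E, g w + c ≤ S w.1 w.2) {lam : ℝ} (hl : 0 < lam)
    (w w' : H × E) {Q : ℝ}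
    (hQ : max 1 (4 * lam * ((S w.1 w.2 - g w - c) + 1) + 4 * lam * ‖g‖) ≤ Q) :
    moreauEnv2 S lam w'.1 w'.2 ≤ moreauEnv2 S lam w.1 w.2 +
      (‖w'.1 - w.1‖ * (‖w'.1 - w.1‖ + 2 * Q) + ‖w'.2 - w.2‖ * (‖w'.2 - w.2‖ + 2 * Q))
        / (2 * lam) := by
  set G := ‖g‖ with hGdef
  have hG : (0:ℝ) ≤ G := ContinuousLinearMap.opNorm_nonneg g
  set Dw := S w.1 w.2 - g w - c with hDdef
  have hD : 0 ≤ Dw := by have := hgc w; simp only [hDdef]; linarith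
  have h2l : (0:ℝ) < 2 * lam := by linarith
  set dx := ‖w'.1 - w.1‖ with hdx
  set dz := ‖w'.2 - w.2‖ with hdz
  have hdx0 : 0 ≤ dx := norm_nonneg _
  have hdz0 : 0 ≤ dz := norm_nonneg _
  refine le_of_forall_pos_le_add fun ε hε => ?_
  set ε1 := min ε 1 with hε1def
  have hε1 : 0 < ε1 := lt_min hε one_pos
  have hε1le : ε1 ≤ 1 := min_le_right _ _
  have hε1ε : ε1 ≤ ε := min_le_left _ _
  obtain ⟨u, hu⟩ := exists_lt_of_ciInf_lt
    (show moreauEnv2 S lam w.1 w.2 < moreauEnv2 S lam w.1 w.2 + ε1 from by linarith)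
  set a := ‖w.1 - u.1‖ with ha
  set b := ‖w.2 - u.2‖ with hb
  have ha0 : 0 ≤ a := norm_nonneg _
  have hb0 : 0 ≤ b := norm_nonneg _
  have hMle : moreauEnv2 S lam w.1 w.2 ≤ S w.1 w.2 := mor_le hgc hl w.1 w.2
  have hSu : g w + c - G * (a + b) ≤ S u.1 u.2 := by
    have h1 := hgc u
    have hgw : g w - g u = g (w - u) := by rw [map_sub]
    have hnorm : ‖w - u‖ = max a b := by rw [Prod.norm_def]; rfl
    have hga : |g (w - u)| ≤ G * max a b := by
      rw [← hnorm, ← Real.norm_eq_abs]; exact g.le_opNorm _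
    have h2 := (abs_le.1 hga).2
    have hmab : max a b ≤ a + b := max_le (by linarith) (by linarith)
    nlinarith [mul_le_mul_of_nonneg_left hmab hG]
  have h3 : a ^ 2 + b ^ 2 ≤ 2 * lam * (Dw + 1 + G * (a + b)) := by
    have hq : (a ^ 2 + b ^ 2) / (2 * lam) < Dw + 1 + G * (a + b) := by
      have : S u.1 u.2 + (a ^ 2 + b ^ 2) / (2 * lam) < S w.1 w.2 + ε1 := by linarith
      simp only [hDdef]
      linarith [hSu, hε1le]
    rw [div_lt_iff₀ h2l] at hq
    nlinarith [hq]
  have hs : a + b ≤ Q := by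
    refine le_trans ?_ hQ
    rcases le_or_gt (a + b) 1 with hs1 | hs1
    · exact le_trans hs1 (le_max_left _ _)
    · have hss : (a + b) ^ 2 ≤ 4 * lam * (Dw + 1) + 4 * lam * G * (a + b) := by
        nlinarith [sq_nonneg (a - b), h3]
      refine le_trans ?_ (le_max_right _ _)
      rcases le_or_gt (a + b) (4 * lam * G) with h4 | h4
      · have h0 : 0 ≤ 4 * lam * (Dw + 1) := by positivity
        linarith
      · have hpos : (0:ℝ) < a + b - 4 * lam * G := by linarith
        have h5 : (a + b) * (a + b - 4 * lam * G) ≤ 4 * lam * (Dw + 1) := by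
          nlinarith [hss]
        have h6 : (a + b - 4 * lam * G) * 1 ≤ (a + b - 4 * lam * G) * (a + b) :=
          mul_le_mul_of_nonneg_left hs1.le hpos.le
        nlinarith [h5, h6]
  set s := a + b with hsdef
  have hstep : moreauEnv2 S lam w'.1 w'.2 ≤
      S u.1 u.2 + (‖w'.1 - u.1‖ ^ 2 + ‖w'.2 - u.2‖ ^ 2) / (2 * lam) :=
    ciInf_le (mor_bdd hgc hl w'.1 w'.2) u
  have htri1 : ‖w'.1 - u.1‖ ≤ dx + a := by
    have hid : w'.1 - u.1 = (w'.1 - w.1) + (w.1 - u.1) := by abel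
    rw [hid]; exact norm_add_le _ _
  have htri2 : ‖w'.2 - u.2‖ ≤ dz + b := by
    have hid : w'.2 - u.2 = (w'.2 - w.2) + (w.2 - u.2) := by abel
    rw [hid]; exact norm_add_le _ _
  have hq1 : ‖w'.1 - u.1‖ ^ 2 ≤ a ^ 2 + dx * (dx + 2 * Q) := by
    have haQ : a ≤ Q := by linarith [hb0]
    nlinarith [norm_nonneg (w'.1 - u.1), htri1, haQ, hdx0]
  have hq2 : ‖w'.2 - u.2‖ ^ 2 ≤ b ^ 2 + dz * (dz + 2 * Q) := by
    have hbQ : b ≤ Q := by linarith [ha0]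
    nlinarith [norm_nonneg (w'.2 - u.2), htri2, hbQ, hdz0]
  have hdivsum : (‖w'.1 - u.1‖ ^ 2 + ‖w'.2 - u.2‖ ^ 2) / (2 * lam) ≤
      (a ^ 2 + b ^ 2) / (2 * lam) + (dx * (dx + 2 * Q) + dz * (dz + 2 * Q)) / (2 * lam) := by
    rw [← add_div]
    exact (div_le_div_iff_of_pos_right h2l).2 (by linarith [hq1, hq2])
  linarith [hstep, hdivsum, hu, hε1ε]

lemma mor_cont (hgc : ∀ w : H × E, g w + c ≤ S w.1 w.2)
    (hcont : Continuous fun w : H × E => S w.1 w.2) {lam : ℝ} (hl : 0 < lam) :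
    Continuous (fun w : H × E => moreauEnv2 S lam w.1 w.2) := by
  rw [continuous_iff_continuousAt]
  intro w₀
  set R : (H × E) → ℝ := fun w =>
    max 1 (4 * lam * ((S w.1 w.2 - g w - c) + 1) + 4 * lam * ‖g‖) with hRdef
  have hRcont : Continuous R := by
    apply Continuous.max continuous_const
    apply Continuous.add
    · exact continuous_const.mul (((hcont.sub g.continuous).sub continuous_const).add
        continuous_const)
    · exact continuous_const
  set M : (H × E) → ℝ := fun w => moreauEnv2 S lam w.1 w.2 with hMdef
  set Θ : (H × E) → ℝ := fun w' =>
    (‖w'.1 - w₀.1‖ * (‖w'.1 - w₀.1‖ + 2 * max (R w₀) (R w')) +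
     ‖w'.2 - w₀.2‖ * (‖w'.2 - w₀.2‖ + 2 * max (R w₀) (R w'))) / (2 * lam) with hΘdef
  have habs : ∀ w', ‖M w' - M w₀‖ ≤ Θ w' := by
    intro w'
    rw [Real.norm_eq_abs, abs_sub_le_iff]
    constructor
    · have h := mor_est hgc hl w₀ w' (le_max_left (R w₀) (R w'))
      simp only [hΘdef, hMdef]
      linarith [h]
    · have h := mor_est hgc hl w' w₀ (le_max_right (R w₀) (R w'))
      have hrw1 : ‖w₀.1 - w'.1‖ = ‖w'.1 - w₀.1‖ := norm_sub_rev _ _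
      have hrw2 : ‖w₀.2 - w'.2‖ = ‖w'.2 - w₀.2‖ := norm_sub_rev _ _
      rw [hrw1, hrw2] at h
      simp only [hΘdef, hMdef]
      linarith [h]
  have hΘcont : Continuous Θ := by
    apply Continuous.div_const
    apply Continuous.add
    · exact ((continuous_fst.sub continuous_const).norm).mul
        (((continuous_fst.sub continuous_const).norm).add
          (continuous_const.mul (continuous_const.max hRcont)))
    · exact ((continuous_snd.sub continuous_const).norm).mul
        (((continuous_snd.sub continuous_const).norm).add
          (continuous_const.mul (continuous_const.max hRcont)))
  have hΘ0 : Θ w₀ = 0 := by simp [hΘdef]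
  have hΘtend : Tendsto Θ (𝓝 w₀) (𝓝 0) := by
    have := hΘcont.tendsto w₀
    rwa [hΘ0] at this
  have hdiff : Tendsto (fun w' => M w' - M w₀) (𝓝 w₀) (𝓝 0) :=
    squeeze_zero_norm habs hΘtend
  have : Tendsto (fun w' => (M w' - M w₀) + M w₀) (𝓝 w₀) (𝓝 (0 + M w₀)) :=
    hdiff.add_const _
  have h' : Tendsto M (𝓝 w₀) (𝓝 (M w₀)) := by simpa using this
  exact h'

end Mor

open Set in
lemma weak_closed_step {H : Type*} [NormedAddCommGroup H] [InnerProductSpace ℝ H]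
    [CompleteSpace H] {ψ : H → ℝ} (hψconv : ConvexOn ℝ Set.univ ψ) (hψcont : Continuous ψ)
    {x : ℕ → H} {x₀ : H}
    (hw : ∀ y : H, Tendsto (fun k => (inner ℝ (x k) y : ℝ)) atTop (𝓝 (inner ℝ x₀ y)))
    {cs : ℕ → ℝ} {c₀ : ℝ} (hc : Tendsto cs atTop (𝓝 c₀))
    (hev : ∀ j : ℕ, ∃ k, j ≤ k ∧ ψ (x k) ≤ cs k) : ψ x₀ ≤ c₀ := by
  by_contra hlt
  push_neg at hlt
  set r := (c₀ + ψ x₀) / 2 with hr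
  have hrc : c₀ < r := by simp only [hr]; linarith
  have hrψ : r < ψ x₀ := by simp only [hr]; linarith
  set A : Set H := {y | ψ y ≤ r} with hA
  have hAclosed : IsClosed A := IsClosed.preimage hψcont isClosed_Iic
  have hAconv : Convex ℝ A := by
    have := hψconv.convex_le r
    simpa [hA] using this
  have hx₀ : x₀ ∉ A := by simp only [hA, mem_setOf_eq]; linarith
  obtain ⟨f, u, hfa, hfx⟩ := geometric_hahn_banach_closed_point hAconv hAclosed hx₀
  obtain ⟨v, hv⟩ := (InnerProductSpace.toDual ℝ H).surjective f
  have hfapp : ∀ y : H, f y = (inner ℝ y v : ℝ) := by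
    intro y
    rw [← hv]
    simp [InnerProductSpace.toDual_apply_apply, real_inner_comm]
  have h1 : Tendsto (fun k => f (x k)) atTop (𝓝 (f x₀)) := by
    simp only [hfapp]
    exact hw v
  have h2 : ∀ᶠ k in atTop, u < f (x k) := h1.eventually (eventually_gt_nhds hfx)
  have h3 : ∀ᶠ k in atTop, cs k ≤ r := hc.eventually (eventually_le_nhds hrc)
  obtain ⟨j, hj⟩ := (h2.and h3).exists_forall_of_atTop
  obtain ⟨k, hk, hψk⟩ := hev j
  obtain ⟨h2k, h3k⟩ := hj k hk
  have : x k ∈ A := by simp only [hA, mem_setOf_eq]; linarith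
  exact absurd (hfa _ this) (by linarith)

open Set in
/-- Proposition 5.1: Painlevé–Kuratowski convergence of the regularized feasible sets
`M_λ(p) = {x | φ_λ(x) ≥ p}` to `M(p) = {x | φ(x) ≥ p}` as `λ → 0⁺`, and, when `h` is
sequentially weakly continuous, Mosco convergence. -/
theorem stmt13
    {H Y : Type*} [NormedAddCommGroup H] [InnerProductSpace ℝ H] [CompleteSpace H]
    [SecondCountableTopology H]
    [NormedAddCommGroup Y] [NormedSpace ℝ Y] [CompleteSpace Y] {m : ℕ}
    {Ω : Type*} [MeasurableSpace Ω] (P : Measure Ω) [IsProbabilityMeasure P]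
    (ξ : Ω → EuclideanSpace ℝ (Fin m)) (hξ : Measurable ξ)
    (hlaw : P.map ξ ≪ volume)
    (K : Set Y) (hKne : K.Nonempty) (hKcl : IsClosed K) (hKconv : Convex ℝ K)
    (hKcone : ∀ c : ℝ, 0 ≤ c → ∀ y ∈ K, c • y ∈ K)
    (C : Set (WeakDual ℝ Y)) (hCne : C.Nonempty) (hCconv : Convex ℝ C) (hCcpt : IsCompact C)
    (hCgen : closure {w : WeakDual ℝ Y | ∃ c : ℝ, 0 ≤ c ∧ ∃ v ∈ C, w = c • v}
      = {w : WeakDual ℝ Y | ∀ y ∈ K, 0 ≤ w y})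
    (Φ : H → EuclideanSpace ℝ (Fin m) → Y)
    (hΦ : Continuous fun q : H × EuclideanSpace ℝ (Fin m) => Φ q.1 q.2)
    (h : H → ℝ) (hconv : ConvexOn ℝ Set.univ h) (hC1 : ContDiff ℝ 1 h)
    (hscal : ∀ v ∈ C, ConvexOn ℝ Set.univ
      (fun q : H × EuclideanSpace ℝ (Fin m) => v (Φ q.1 q.2) + h q.1))
    (S : H → EuclideanSpace ℝ (Fin m) → ℝ)
    (hS : ∀ x z, S x z = ⨆ v : C, ((v : WeakDual ℝ Y) (Φ x z) + h x))
    (φ : H → ℝ)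
    (hφ : ∀ x, φ x = (P {ω | S x (ξ ω) ≤ h x}).toReal)
    (φl : ℝ → H → ℝ)
    (hφl : ∀ lam x, φl lam x = (P {ω | moreauEnv2 S lam x (ξ ω) ≤ h x}).toReal)
    (p : ℝ) (hp : p ∈ Set.Icc (0 : ℝ) 1)
    (Mp : Set H) (hMp : Mp = {x | p ≤ φ x})
    (Ml : ℝ → Set H) (hMl : ∀ lam, Ml lam = {x | p ≤ φl lam x}) :
    (∀ lam : ℕ → ℝ, (∀ k, 0 < lam k) → Tendsto lam atTop (𝓝 0) →
      (∀ k, Mp ⊆ Ml (lam k)) ∧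
      (∀ (x : ℕ → H) (x₀ : H), (∀ k, x k ∈ Ml (lam k)) → Tendsto x atTop (𝓝 x₀) →
        x₀ ∈ Mp)) ∧
    ((∀ (x : ℕ → H) (x₀ : H), WeakSeqTendsto x x₀ →
        Tendsto (fun k => h (x k)) atTop (𝓝 (h x₀))) →
      ∀ lam : ℕ → ℝ, (∀ k, 0 < lam k) → Tendsto lam atTop (𝓝 0) →
      ∀ (x : ℕ → H) (x₀ : H), (∀ k, x k ∈ Ml (lam k)) → WeakSeqTendsto x x₀ →
        x₀ ∈ Mp) := by
  classical
  have hCne' : Nonempty ↥C := hCne.to_subtype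
  -- a uniform bound on the functionals in C
  obtain ⟨M0, hM0⟩ : ∃ M0 : ℝ, ∀ v : C,
      ‖WeakDual.toStrongDual (v : WeakDual ℝ Y)‖ ≤ M0 := by
    apply banach_steinhaus
    intro y
    have hcont : Continuous fun v : WeakDual ℝ Y => ‖v y‖ := (WeakDual.eval_continuous y).norm
    obtain ⟨B, hB⟩ := (hCcpt.image hcont).bddAbove
    exact ⟨B, fun v => hB (Set.mem_image_of_mem _ v.2)⟩
  set M : ℝ := max M0 0 with hMdef
  have hMnn : 0 ≤ M := le_max_right _ _
  have hM : ∀ v ∈ C, ∀ y : Y, |(v : WeakDual ℝ Y) y| ≤ M * ‖y‖ := by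
    intro v hv y
    have h1 := (WeakDual.toStrongDual v).le_opNorm y
    have h2 := hM0 ⟨v, hv⟩
    have h3 : ‖WeakDual.toStrongDual v‖ * ‖y‖ ≤ M * ‖y‖ := by
      apply mul_le_mul_of_nonneg_right _ (norm_nonneg y)
      exact h2.trans (le_max_left _ _)
    calc |(v : WeakDual ℝ Y) y| = ‖WeakDual.toStrongDual v y‖ := rfl
      _ ≤ ‖WeakDual.toStrongDual v‖ * ‖y‖ := h1
      _ ≤ M * ‖y‖ := h3
  -- boundedness of the defining family
  have hbdd : ∀ (x : H) (z : EuclideanSpace ℝ (Fin m)),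
      BddAbove (Set.range fun v : C => ((v : WeakDual ℝ Y) (Φ x z) + h x)) := by
    intro x z
    refine ⟨M * ‖Φ x z‖ + h x, ?_⟩
    rintro _ ⟨v, rfl⟩
    have h1 := hM v v.2 (Φ x z)
    have h2 := le_abs_self ((v : WeakDual ℝ Y) (Φ x z))
    simp only
    linarith
  -- convexity of S as a function on the product
  have hFconv : ConvexOn ℝ Set.univ (fun w : H × EuclideanSpace ℝ (Fin m) => S w.1 w.2) := by
    refine ⟨convex_univ, fun w1 _ w2 _ A B hA hB hab => ?_⟩
    simp only [hS, smul_eq_mul]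
    refine ciSup_le fun v => ?_
    have h2 := (hscal v v.2).2 (Set.mem_univ w1) (Set.mem_univ w2) hA hB hab
    simp only [smul_eq_mul] at h2
    calc (v : WeakDual ℝ Y) (Φ (A • w1 + B • w2).1 (A • w1 + B • w2).2)
          + h (A • w1 + B • w2).1
        ≤ A * ((v : WeakDual ℝ Y) (Φ w1.1 w1.2) + h w1.1)
          + B * ((v : WeakDual ℝ Y) (Φ w2.1 w2.2) + h w2.1) := h2
      _ ≤ A * (⨆ v : C, ((v : WeakDual ℝ Y) (Φ w1.1 w1.2) + h w1.1))
          + B * (⨆ v : C, ((v : WeakDual ℝ Y) (Φ w2.1 w2.2) + h w2.1)) :=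
          add_le_add (mul_le_mul_of_nonneg_left (le_ciSup (hbdd w1.1 w1.2) v) hA)
            (mul_le_mul_of_nonneg_left (le_ciSup (hbdd w2.1 w2.2) v) hB)
  -- continuity of S
  have hFkey : ∀ w w' : H × EuclideanSpace ℝ (Fin m), S w.1 w.2 ≤ S w'.1 w'.2
      + (M * ‖Φ w.1 w.2 - Φ w'.1 w'.2‖ + |h w.1 - h w'.1|) := by
    intro w w'
    simp only [hS]
    refine ciSup_le fun v => ?_
    have h1 : (v : WeakDual ℝ Y) (Φ w.1 w.2) = (v : WeakDual ℝ Y) (Φ w'.1 w'.2)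
        + (v : WeakDual ℝ Y) (Φ w.1 w.2 - Φ w'.1 w'.2) := by
      rw [map_sub]; ring
    have h2 := (abs_le.1 (hM v v.2 (Φ w.1 w.2 - Φ w'.1 w'.2))).2
    have h3 := le_ciSup (hbdd w'.1 w'.2) v
    have h4 := le_abs_self (h w.1 - h w'.1)
    linarith [h1, h2, h3, h4]
  have hFcont : Continuous (fun w : H × EuclideanSpace ℝ (Fin m) => S w.1 w.2) := by
    rw [continuous_iff_continuousAt]
    intro w₀
    set Θ : (H × EuclideanSpace ℝ (Fin m)) → ℝ := fun w =>
      M * ‖Φ w.1 w.2 - Φ w₀.1 w₀.2‖ + |h w.1 - h w₀.1| with hΘdef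
    have habs : ∀ w, ‖S w.1 w.2 - S w₀.1 w₀.2‖ ≤ Θ w := by
      intro w
      rw [Real.norm_eq_abs, abs_sub_le_iff]
      constructor
      · have := hFkey w w₀; simp only [hΘdef]; linarith
      · have := hFkey w₀ w
        have hrw1 : ‖Φ w₀.1 w₀.2 - Φ w.1 w.2‖ = ‖Φ w.1 w.2 - Φ w₀.1 w₀.2‖ := norm_sub_rev _ _
        have hrw2 : |h w₀.1 - h w.1| = |h w.1 - h w₀.1| := abs_sub_comm _ _
        rw [hrw1, hrw2] at this
        simp only [hΘdef]; linarith
    have hΘcont : Continuous Θ := by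
      apply Continuous.add
      · exact continuous_const.mul ((hΦ.sub continuous_const).norm)
      · exact ((hC1.continuous.comp continuous_fst).sub continuous_const).abs
    have hΘ0 : Θ w₀ = 0 := by simp [hΘdef]
    have hΘtend : Tendsto Θ (𝓝 w₀) (𝓝 0) := by
      have := hΘcont.tendsto w₀; rwa [hΘ0] at this
    have hdiff : Tendsto (fun w => S w.1 w.2 - S w₀.1 w₀.2) (𝓝 w₀) (𝓝 0) :=
      squeeze_zero_norm habs hΘtend
    have : Tendsto (fun w => (S w.1 w.2 - S w₀.1 w₀.2) + S w₀.1 w₀.2) (𝓝 w₀)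
        (𝓝 (0 + S w₀.1 w₀.2)) := hdiff.add_const _
    have h' : Tendsto (fun w : H × EuclideanSpace ℝ (Fin m) => S w.1 w.2) (𝓝 w₀) (𝓝 (S w₀.1 w₀.2)) := by
      simpa using this
    exact h'
  -- affine minorant
  obtain ⟨g, c, hgc⟩ := exists_minorant hFconv hFcont
  -- inclusion Mp ⊆ Ml lam for any lam > 0
  have hincl : ∀ lam : ℝ, 0 < lam → Mp ⊆ Ml lam := by
    intro lam hlam x hx
    rw [hMp, Set.mem_setOf_eq, hφ] at hx
    rw [hMl, Set.mem_setOf_eq, hφl]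
    refine hx.trans (ENNReal.toReal_mono (measure_ne_top P _) (measure_mono ?_))
    intro ω hω
    exact le_trans (mor_le hgc hlam x (ξ ω)) hω
  -- core convergence lemma
  have core : ∀ lam : ℕ → ℝ, (∀ k, 0 < lam k) → Tendsto lam atTop (𝓝 0) →
      ∀ (x : ℕ → H) (x₀ : H), (∀ k, x k ∈ Ml (lam k)) → WeakSeqTendsto x x₀ →
      Tendsto (fun k => h (x k)) atTop (𝓝 (h x₀)) → x₀ ∈ Mp := by
    intro lam hpos hto x x₀ hxk hw hh
    rw [hMp, Set.mem_setOf_eq, hφ]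
    set Ak : ℕ → Set Ω := fun k =>
      {ω | moreauEnv2 S (lam k) (x k) (ξ ω) ≤ h (x k)} with hAkdef
    have hAkm : ∀ k, MeasurableSet (Ak k) := by
      intro k
      have hzc : Continuous fun z : EuclideanSpace ℝ (Fin m) =>
          moreauEnv2 S (lam k) (x k) z := by
        have h1 := (mor_cont hgc hFcont (hpos k)).comp (Continuous.prodMk_right (x k))
        simpa [Function.comp_def] using h1
      exact hξ ((measurableSet_le hzc.measurable measurable_const))
    have hAkp : ∀ k, ENNReal.ofReal p ≤ P (Ak k) := by
      intro k
      have := hxk k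
      rw [hMl, Set.mem_setOf_eq, hφl] at this
      exact (ENNReal.ofReal_le_iff_le_toReal (measure_ne_top P _)).2 this
    set U : ℕ → Set Ω := fun N => ⋃ k, ⋃ (_ : N ≤ k), Ak k with hUdef
    have hUm : ∀ N, MeasurableSet (U N) :=
      fun N => MeasurableSet.iUnion fun k => MeasurableSet.iUnion fun _ => hAkm k
    have hUmono : Antitone U := by
      intro N N' hNN'
      simp only [hUdef]
      exact Set.iUnion₂_subset fun k hk =>
        Set.subset_iUnion₂ (s := fun k (_ : N ≤ k) => Ak k) k (hNN'.trans hk)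
    have hUp : ∀ N, ENNReal.ofReal p ≤ P (U N) := by
      intro N
      refine (hAkp N).trans (measure_mono ?_)
      simp only [hUdef]
      exact Set.subset_iUnion₂ (s := fun k (_ : N ≤ k) => Ak k) N le_rfl
    have hlim := tendsto_measure_iInter_atTop (μ := P)
      (fun N => (hUm N).nullMeasurableSet) hUmono ⟨0, measure_ne_top P _⟩
    have hLp : ENNReal.ofReal p ≤ P (⋂ N, U N) :=
      ge_of_tendsto hlim (Eventually.of_forall hUp)
    have hsub : (⋂ N, U N) ⊆ {ω | S x₀ (ξ ω) ≤ h x₀} := by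
      intro ω hω
      simp only [hUdef, Set.mem_iInter, Set.mem_iUnion] at hω
      show S x₀ (ξ ω) ≤ h x₀
      set z := ξ ω with hz
      have key : ∀ μ : ℝ, 0 < μ → moreauEnv2 S μ x₀ z ≤ h x₀ := by
        intro μ hμ
        have hψconv : ConvexOn ℝ Set.univ (fun y : H => moreauEnv2 S μ y z) := by
          have hj := mor_convex hFconv hgc hμ
          refine ⟨convex_univ, fun y1 _ y2 _ A B hA hB hab => ?_⟩
          have h2 := hj.2 (Set.mem_univ ((y1 : H), z)) (Set.mem_univ ((y2 : H), z)) hA hB hab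
          have hzz : A • ((y1 : H), z) + B • ((y2 : H), z) = (A • y1 + B • y2, z) := by
            have hzc : A • z + B • z = z := by rw [← add_smul, hab, one_smul]
            simp [Prod.smul_mk, Prod.mk_add_mk, hzc]
          rw [hzz] at h2
          simpa using h2
        have hψcont : Continuous (fun y : H => moreauEnv2 S μ y z) := by
          have h1 := (mor_cont hgc hFcont hμ).comp
            (continuous_id.prodMk (continuous_const (y := z)))
          simpa [Function.comp_def] using h1
        refine weak_closed_step hψconv hψcont hw hh ?_
        intro j
        obtain ⟨N₀, hN₀⟩ := eventually_atTop.1 (hto.eventually (eventually_lt_nhds hμ))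
        obtain ⟨k, hk, hkA⟩ := hω (max j N₀)
        refine ⟨k, le_trans (le_max_left _ _) hk, ?_⟩
        have hm := mor_mono hgc (hpos k) (hN₀ k (le_trans (le_max_right _ _) hk)).le (x k) z
        exact hm.trans hkA
      refine le_of_forall_pos_le_add fun ε hε => ?_
      obtain ⟨l0, hl0, happrox⟩ := mor_approx hgc hFcont x₀ z hε
      have h1 := key l0 hl0
      have h2 := happrox l0 hl0 le_rfl
      linarith
    exact (ENNReal.ofReal_le_iff_le_toReal (measure_ne_top P _)).1
      (hLp.trans (measure_mono hsub))
  constructor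
  · intro lam hpos hto
    refine ⟨fun k => hincl (lam k) (hpos k), fun x x₀ hxk hst => ?_⟩
    refine core lam hpos hto x x₀ hxk ?_ ?_
    · intro y
      exact ((continuous_id.inner continuous_const).tendsto x₀).comp hst
    · exact (hC1.continuous.tendsto x₀).comp hst
  · intro hseq lam hpos hto x x₀ hxk hw
    exact core lam hpos hto x x₀ hxk hw (hseq x x₀ hw)
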